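/- For a two-level graph Γ with edges E, prongs p_e ≥ 1, ℓ = lcm_{e}(p_e), define P = Σ_e p_e and P_{-1} = Σ_e 1/p_e. Suppose for each bottom-level vertex Y_j with adjacent edge set E_j the twisting coefficient is σ = ⌊ℓ/2⌋ and the bridge coefficients are chosen optimally as above. Then the twisting correction satisfies Δ ≥ ⌊ℓ/2⌋ Σ_j (α_{Y_j} - m_{Y_j}/2) + (ℓ/8)(P - P_{-1}), where α_{Y_j} and m_{Y_j} are the sums of the α_i and m_i over marked points on Y_j, and Δ = -½ Σ_j Σ_{e∈E_j} Σ_{k=1}^{a_e}(s_{e,k}-s_{e,k-1})² + ½ Σ_j σ_j(2α_{Y_j} - m_{Y_j} + p_{Y_j}) with a_e = ℓ/p_e, p_{Y_j} = Σ_{e∈E_j} p_e. -/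

import Mathlib

private lemma stmt17_int_bound (a p : ℕ) (ha : 1 ≤ a) :
    ((4 * a * (((a*p)/2)/a * ((a*p)/2) + ((a*p)/2) % a * (((a*p)/2)/a + 1)) : ℕ) : ℤ)
      ≤ 4 * (((a*p)/2 : ℕ) : ℤ) * ((a*p : ℕ) : ℤ) - ((a*p : ℕ) : ℤ)^2 + (a : ℤ)^2 := by
  set L := a * p with hL
  set σ := L / 2 with hσdef
  set q := σ / a with hq
  set r := σ % a with hr
  have hσ : (σ : ℤ) = a * q + r := by exact_mod_cast (Nat.div_add_mod σ a).symm
  have hrlt : (r : ℤ) < a := by exact_mod_cast Nat.mod_lt _ (by omega)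
  have hrpos : (0:ℤ) ≤ r := by positivity
  have hmod : 2 * (σ : ℤ) + ((L % 2 : ℕ) : ℤ) = L := by
    have := Nat.div_add_mod L 2; push_cast; omega
  have hparity : ((2 * (σ:ℤ) - L))^2 ≤ ((a:ℤ) - 2*r)^2 := by
    rcases Nat.mod_two_eq_zero_or_one L with h | h
    · rw [h] at hmod; push_cast at hmod
      have h0 : (2 * (σ:ℤ) - L) = 0 := by linarith
      rw [h0]; positivity
    · have haodd : a % 2 = 1 := by
        rcases Nat.mod_two_eq_zero_or_one a with h2 | h2
        · exfalso; rw [hL, Nat.mul_mod, h2] at h; simp at h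
        · exact h2
      have hane : ((a:ℤ) - 2*r) ≠ 0 := by
        intro h0
        have hai : (a:ℤ) % 2 = 1 := by exact_mod_cast haodd
        omega
      have h1 : (1:ℤ) ≤ |(a:ℤ) - 2*r| := Int.one_le_abs hane
      have h2 : (2 * (σ:ℤ) - L) = -1 := by rw [h] at hmod; push_cast at hmod; linarith
      nlinarith [sq_abs ((a:ℤ) - 2*r)]
  have key : (4*(a:ℤ)*(q*σ + r*(q+1))) = 4*(σ:ℤ)^2 - 4*(r:ℤ)^2 + 4*(a:ℤ)*r := by
    linear_combination (-4*(σ:ℤ) - 4*(r:ℤ)) * hσ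
  have final : (4*(a:ℤ)*((q:ℤ)*σ + r*(q+1))) ≤ 4*(σ:ℤ)*L - (L:ℤ)^2 + (a:ℤ)^2 := by
    nlinarith [hparity, key]
  push_cast
  push_cast at final
  linarith

private lemma stmt17_edge_bound (ℓ p : ℕ) (hp : 1 ≤ p) (hd : p ∣ ℓ) (hℓ : 1 ≤ ℓ) :
    (((ℓ/2)/(ℓ/p)*(ℓ/2) + (ℓ/2)%(ℓ/p)*((ℓ/2)/(ℓ/p)+1) : ℕ) : ℚ)
      ≤ ((ℓ/2 : ℕ) : ℚ) * p - (ℓ : ℚ)/4 * ((p:ℚ) - 1/(p:ℚ)) := by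
  set a := ℓ / p with hadef
  have hap : a * p = ℓ := Nat.div_mul_cancel hd
  have ha : 1 ≤ a := Nat.div_pos (Nat.le_of_dvd hℓ hd) hp
  have hint := stmt17_int_bound a p ha
  rw [hap] at hint
  have hQ : (4 * (a:ℚ) * ((((ℓ/2)/a * (ℓ/2) + (ℓ/2) % a * ((ℓ/2)/a + 1) : ℕ)) : ℚ))
      ≤ 4 * ((ℓ/2 : ℕ) : ℚ) * (ℓ : ℚ) - (ℓ:ℚ)^2 + (a:ℚ)^2 := by
    have h := (@Int.cast_le ℚ _ _ _).mpr hint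
    simp only [Int.cast_natCast, Int.cast_mul, Int.cast_sub, Int.cast_add, Int.cast_pow, Int.cast_ofNat, Nat.cast_mul, Nat.cast_add, Nat.cast_ofNat, Nat.cast_one, Nat.cast_pow] at h ⊢
    linarith
  have hpq : (0:ℚ) < p := by exact_mod_cast hp
  have haq : (0:ℚ) < a := by exact_mod_cast ha
  have hℓq : (a:ℚ) * p = ℓ := by exact_mod_cast hap
  rw [← mul_le_mul_iff_right₀ (show (0:ℚ) < 4*a by positivity)]
  have hrhs : 4*(a:ℚ) * (((ℓ/2 : ℕ) : ℚ) * p - (ℓ : ℚ)/4 * ((p:ℚ) - 1/(p:ℚ)))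
      = 4 * ((ℓ/2 : ℕ) : ℚ) * (ℓ : ℚ) - (ℓ:ℚ)^2 + (a:ℚ)^2 := by
    rw [← hℓq]
    field_simp
    ring
  rw [hrhs]
  exact hQ


/-- Let `Γ` be a two-level graph with bottom-level vertices `Vb`, edges `E`
(each edge `e` attached to the bottom vertex `owner e`), prongs `p e ≥ 1`,
`ℓ = lcm_e p_e`, `P = Σ_e p_e` and `P_{-1} = Σ_e 1/p_e`, and marked points `Z` on the bottom
level (point `z` lying on the vertex `vtx z`, with weights `αw z` and orders `mw z`, so that
`α_{Y_j}` and `m_{Y_j}` are the corresponding sums over the points of `Y_j`).  Suppose for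
each bottom vertex the twisting coefficient is `σ = ⌊ℓ/2⌋`, and the bridge coefficients
`s_{e,k}` (`k = 0, …, a_e = ℓ/p_e`, `s_{e,0} = 0`, `s_{e,a_e} = σ`) are chosen optimally,
i.e. achieving the minimal value `q_e σ + r_e (q_e + 1)` of `Σ_k (s_{e,k}-s_{e,k-1})²` where
`σ = q_e a_e + r_e`, `0 ≤ r_e < a_e`.  Then the twisting correction
`Δ = -½ Σ_j Σ_{e ∈ E_j} Σ_{k=1}^{a_e} (s_{e,k}-s_{e,k-1})²
     + ½ Σ_j σ (2α_{Y_j} - m_{Y_j} + p_{Y_j})`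
satisfies `Δ ≥ ⌊ℓ/2⌋ Σ_j (α_{Y_j} - m_{Y_j}/2) + (ℓ/8)(P - P_{-1})`. -/
theorem stmt17 (Vb E Z : Type) [Fintype Vb] [Fintype E] [Fintype Z] [DecidableEq Vb]
    (owner : E → Vb) (vtx : Z → Vb) (p : E → ℕ) (hp : ∀ e, 1 ≤ p e)
    (ℓ : ℕ) (hℓ : ℓ = Finset.univ.lcm p)
    (αw mw : Z → ℚ) (s : E → ℕ → ℤ)
    (hs0 : ∀ e, s e 0 = 0) (hsend : ∀ e, s e (ℓ / p e) = ((ℓ / 2 : ℕ) : ℤ))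
    (hopt : ∀ e, ∑ k ∈ Finset.range (ℓ / p e), (s e (k + 1) - s e k) ^ 2
      = (((ℓ / 2) / (ℓ / p e) * (ℓ / 2)
          + (ℓ / 2) % (ℓ / p e) * ((ℓ / 2) / (ℓ / p e) + 1) : ℕ) : ℤ)) :
    let αY : Vb → ℚ := fun j => ∑ z ∈ Finset.univ.filter (fun z => vtx z = j), αw z
    let mY : Vb → ℚ := fun j => ∑ z ∈ Finset.univ.filter (fun z => vtx z = j), mw z
    let pY : Vb → ℚ := fun j => ∑ e ∈ Finset.univ.filter (fun e => owner e = j), (p e : ℚ)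
    let Δ : ℚ :=
      -(1 / 2) * ∑ j : Vb, ∑ e ∈ Finset.univ.filter (fun e => owner e = j),
          ∑ k ∈ Finset.range (ℓ / p e), ((s e (k + 1) - s e k : ℤ) : ℚ) ^ 2
        + (1 / 2) * ∑ j : Vb, ((ℓ / 2 : ℕ) : ℚ) * (2 * αY j - mY j + pY j)
    ((ℓ / 2 : ℕ) : ℚ) * (∑ j : Vb, (αY j - mY j / 2))
        + (ℓ : ℚ) / 8 * ((∑ e : E, (p e : ℚ)) - ∑ e : E, 1 / (p e : ℚ)) ≤ Δ := by
  intro αY mY pY Δ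
  -- ℓ is positive
  have hℓpos : 1 ≤ ℓ := by
    rw [hℓ]
    rw [Nat.one_le_iff_ne_zero]
    intro h0
    rcases Finset.lcm_eq_zero_iff.mp h0 with ⟨e, _, he⟩
    exact absurd he.symm (by have := hp e; omega)
  have hdvd : ∀ e : E, p e ∣ ℓ := fun e => hℓ ▸ Finset.dvd_lcm (Finset.mem_univ e)
  -- abbreviation for the per-edge optimal cost
  set C : E → ℚ := fun e =>
    (((ℓ / 2) / (ℓ / p e) * (ℓ / 2)
      + (ℓ / 2) % (ℓ / p e) * ((ℓ / 2) / (ℓ / p e) + 1) : ℕ) : ℚ) with hC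
  -- rewrite the inner square sums using optimality
  have hinner : ∀ e : E, (∑ k ∈ Finset.range (ℓ / p e), ((s e (k + 1) - s e k : ℤ) : ℚ) ^ 2)
      = C e := by
    intro e
    show _ = (((ℓ / 2) / (ℓ / p e) * (ℓ / 2)
      + (ℓ / 2) % (ℓ / p e) * ((ℓ / 2) / (ℓ / p e) + 1) : ℕ) : ℚ)
    rw [← @Int.cast_natCast ℚ _ _, ← hopt e]
    push_cast
    ring
  have hfib : ∀ f : E → ℚ,
      (∑ j : Vb, ∑ e ∈ Finset.univ.filter (fun e => owner e = j), f e) = ∑ e : E, f e :=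
    fun f => Finset.sum_fiberwise _ _ _
  set σ : ℚ := ((ℓ / 2 : ℕ) : ℚ) with hσ
  set S : ℚ := ∑ j : Vb, (αY j - mY j / 2) with hS
  -- Δ rewritten
  have hΔ : Δ = -(1/2) * (∑ e : E, C e) + σ * S + (σ/2) * ∑ e : E, (p e : ℚ) := by
    show (-(1 / 2) * ∑ j : Vb, ∑ e ∈ Finset.univ.filter (fun e => owner e = j),
          ∑ k ∈ Finset.range (ℓ / p e), ((s e (k + 1) - s e k : ℤ) : ℚ) ^ 2
        + (1 / 2) * ∑ j : Vb, σ * (2 * αY j - mY j + pY j)) = _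
    have e1 : (∑ j : Vb, ∑ e ∈ Finset.univ.filter (fun e => owner e = j),
        ∑ k ∈ Finset.range (ℓ / p e), ((s e (k + 1) - s e k : ℤ) : ℚ) ^ 2)
        = ∑ e : E, C e := by
      rw [← hfib C]
      exact Finset.sum_congr rfl fun j _ => Finset.sum_congr rfl fun e _ => hinner e
    have e3 : (∑ j : Vb, pY j) = ∑ e : E, (p e : ℚ) := hfib (fun e => (p e : ℚ))
    have e2 : (∑ j : Vb, σ * (2 * αY j - mY j + pY j))
        = 2 * σ * S + σ * ∑ e : E, (p e : ℚ) := by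
      rw [← e3, hS, Finset.mul_sum, Finset.mul_sum, ← Finset.sum_add_distrib]
      exact Finset.sum_congr rfl fun j _ => by ring
    rw [e1, e2]
    ring
  rw [hΔ]
  -- per-edge bound summed
  have hsum : (∑ e : E, C e) ≤ ∑ e : E, (σ * (p e : ℚ) - (ℓ : ℚ)/4 * ((p e : ℚ) - 1/(p e : ℚ))) :=
    Finset.sum_le_sum fun e _ => stmt17_edge_bound ℓ (p e) (hp e) (hdvd e) hℓpos
  have hsplit : (∑ e : E, (σ * (p e : ℚ) - (ℓ : ℚ)/4 * ((p e : ℚ) - 1/(p e : ℚ))))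
      = σ * (∑ e : E, (p e : ℚ)) - (ℓ : ℚ)/4 * ((∑ e : E, (p e : ℚ)) - ∑ e : E, 1/(p e : ℚ)) := by
    simp only [Finset.mul_sum, Finset.sum_sub_distrib, mul_sub]
  linarith [hsum, hsplit]
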